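/- For every a ∈ [0,1), every x in the open unit ball B ⊂ ℝ^n (n ≥ 2) and every y ∈ ℝ^n, one has (1/(1+a))² h_K^*(x;y) ≤ F_a^*(x,y)² ≤ (1/(1−a))² h_K^*(x;y), where h_K^*(x;y) = (1−|x|²)(|y|² − ⟨x,y⟩²) is the Klein co-metric. -/

import Mathlib

open Metric

/-- The polar transform (co-metric) of the Funk-type metric `F_a`. -/
noncomputable def FaStar (n : ℕ) (a : ℝ) (x y : EuclideanSpace ℝ (Fin n)) : ℝ :=
  (Real.sqrt ((1 - ‖x‖ ^ 2) * (1 - a ^ 2 * ‖x‖ ^ 2) * ‖y‖ ^ 2 -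
      (1 - a ^ 2) * (1 - ‖x‖ ^ 2) * (inner ℝ x y : ℝ) ^ 2) -
    a * (1 - ‖x‖ ^ 2) * (inner ℝ x y : ℝ)) / (1 - a ^ 2 * ‖x‖ ^ 2)

/-- The Klein co-metric `h_K^*(x;y) = (1-|x|²)(|y|² - ⟨x,y⟩²)`. -/
noncomputable def hKStar (n : ℕ) (x y : EuclideanSpace ℝ (Fin n)) : ℝ :=
  (1 - ‖x‖ ^ 2) * (‖y‖ ^ 2 - (inner ℝ x y : ℝ) ^ 2)


set_option maxHeartbeats 1000000 in
lemma funk_key (a p m t : ℝ) (ha0 : 0 ≤ a) (ha1 : a < 1) (hp0 : 0 ≤ p) (hp1 : p < 1)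
    (hm : 0 ≤ m) (ht : t ^ 2 ≤ p ^ 2 * m ^ 2) :
    (1 / (1 + a)) ^ 2 * ((1 - p ^ 2) * (m ^ 2 - t ^ 2)) ≤
      ((Real.sqrt ((1 - p ^ 2) * (1 - a ^ 2 * p ^ 2) * m ^ 2 -
          (1 - a ^ 2) * (1 - p ^ 2) * t ^ 2) - a * (1 - p ^ 2) * t) / (1 - a ^ 2 * p ^ 2)) ^ 2 ∧
    ((Real.sqrt ((1 - p ^ 2) * (1 - a ^ 2 * p ^ 2) * m ^ 2 -
          (1 - a ^ 2) * (1 - p ^ 2) * t ^ 2) - a * (1 - p ^ 2) * t) / (1 - a ^ 2 * p ^ 2)) ^ 2 ≤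
      (1 / (1 - a)) ^ 2 * ((1 - p ^ 2) * (m ^ 2 - t ^ 2)) := by
  have ha1' : 0 < 1 + a := by linarith
  have ha1'' : 0 < 1 - a := by linarith
  have hap : a * p < 1 := by nlinarith [mul_le_mul_of_nonneg_left hp1.le ha0]
  have hc : 0 < 1 - a ^ 2 * p ^ 2 := by nlinarith [mul_nonneg ha0 hp0]
  have hp1' : 0 < 1 - p ^ 2 := by nlinarith
  have hh : 0 ≤ (1 - p ^ 2) * (m ^ 2 - t ^ 2) := by
    have hmt : 0 ≤ m ^ 2 - t ^ 2 := by nlinarith [mul_nonneg hp1'.le (sq_nonneg m)]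
    exact mul_nonneg hp1'.le hmt
  set H := Real.sqrt ((1 - p ^ 2) * (m ^ 2 - t ^ 2)) with hHdef
  have hH0 : 0 ≤ H := Real.sqrt_nonneg _
  have hH2 : H ^ 2 = (1 - p ^ 2) * (m ^ 2 - t ^ 2) := Real.sq_sqrt hh
  have hSval : (1 - p ^ 2) * (1 - a ^ 2 * p ^ 2) * m ^ 2 - (1 - a ^ 2) * (1 - p ^ 2) * t ^ 2
      = (a * (1 - p ^ 2) * t) ^ 2 + (1 - a ^ 2 * p ^ 2) * H ^ 2 := by
    rw [hH2]; ring
  set S := (1 - p ^ 2) * (1 - a ^ 2 * p ^ 2) * m ^ 2 - (1 - a ^ 2) * (1 - p ^ 2) * t ^ 2 with hSdef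
  set s := Real.sqrt S with hsdef
  have hs0 : 0 ≤ s := Real.sqrt_nonneg _
  have hS0 : 0 ≤ S := by rw [hSval]; positivity
  have hs2 : s ^ 2 = S := Real.sq_sqrt hS0
  -- key inequality: (1-p^2)|t| ≤ p*H
  have h1 : ((1 - p ^ 2) * t) ^ 2 ≤ (p * H) ^ 2 := by
    have hpH : (p * H) ^ 2 = p ^ 2 * ((1 - p ^ 2) * (m ^ 2 - t ^ 2)) := by rw [mul_pow, hH2]
    nlinarith [mul_nonneg hp1'.le (sub_nonneg.mpr ht)]
  have h2 : |(1 - p ^ 2) * t| ≤ p * H := by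
    have := Real.sqrt_le_sqrt h1
    rwa [Real.sqrt_sq_eq_abs, Real.sqrt_sq (mul_nonneg hp0 hH0)] at this
  have h2a : -(p * H) ≤ (1 - p ^ 2) * t := neg_le_of_abs_le h2
  have h2b : (1 - p ^ 2) * t ≤ p * H := le_of_abs_le h2
  -- lower bound (multiplied form)
  have hlow' : (1 - a ^ 2 * p ^ 2) * H ≤ (s - a * (1 - p ^ 2) * t) * (1 + a) := by
    set A := (1 - a ^ 2 * p ^ 2) * H + (1 + a) * (a * (1 - p ^ 2) * t) with hAdef
    have hbr : 0 ≤ a * (2 + a + a * p ^ 2) * H - 2 * a * (1 + a) * ((1 - p ^ 2) * t) := by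
      nlinarith [mul_nonneg (mul_nonneg ha0 hH0)
          (mul_nonneg (sub_nonneg.mpr hp1.le) (sub_nonneg.mpr hp1.le)),
        mul_nonneg ha0 (mul_nonneg hH0 (sub_nonneg.mpr hp1.le))]
    rcases le_or_gt A 0 with hA | hA
    · nlinarith
    · have hA2 : A ^ 2 ≤ (1 + a) ^ 2 * S := by
        have hexp : (1 + a) ^ 2 * S - A ^ 2 =
            (1 - a ^ 2 * p ^ 2) * H *
              (a * (2 + a + a * p ^ 2) * H - 2 * a * (1 + a) * ((1 - p ^ 2) * t)) := by
          rw [hSval, hAdef]; ring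
        nlinarith [mul_nonneg (mul_nonneg hc.le hH0) hbr]
      have hAs : A ≤ (1 + a) * s := by
        have h1s : (1 + a) * s = Real.sqrt ((1 + a) ^ 2 * S) := by
          rw [Real.sqrt_mul (by positivity) S, Real.sqrt_sq ha1'.le]
        calc A = Real.sqrt (A ^ 2) := (Real.sqrt_sq hA.le).symm
          _ ≤ Real.sqrt ((1 + a) ^ 2 * S) := Real.sqrt_le_sqrt hA2
          _ = (1 + a) * s := h1s.symm
      nlinarith
  -- upper bound (multiplied form)
  have hupp' : (s - a * (1 - p ^ 2) * t) * (1 - a) ≤ (1 - a ^ 2 * p ^ 2) * H := by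
    set B := (1 - a ^ 2 * p ^ 2) * H + (1 - a) * (a * (1 - p ^ 2) * t) with hBdef
    have hB0 : 0 ≤ B := by
      have hap' : (0:ℝ) ≤ 1 - a * p := by linarith
      nlinarith [mul_le_mul_of_nonneg_left h2a (mul_nonneg ha0 ha1''.le),
        mul_nonneg hH0 hap',
        mul_nonneg (mul_nonneg (mul_nonneg (mul_nonneg ha0 ha0) hp0)
          (sub_nonneg.mpr hp1.le)) hH0]
    have hB2 : (1 - a) ^ 2 * S ≤ B ^ 2 := by
      have hexp : B ^ 2 - (1 - a) ^ 2 * S =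
          (1 - a ^ 2 * p ^ 2) * H *
            (a * (2 - a - a * p ^ 2) * H + 2 * a * (1 - a) * ((1 - p ^ 2) * t)) := by
        rw [hSval, hBdef]; ring
      have hbr : 0 ≤ a * (2 - a - a * p ^ 2) * H + 2 * a * (1 - a) * ((1 - p ^ 2) * t) := by
        have h3 : (0:ℝ) ≤ 2 - a * (1 - p) := by nlinarith
        nlinarith [mul_le_mul_of_nonneg_left h2a
            (by positivity : (0:ℝ) ≤ 2 * a * (1 - a)),
          mul_nonneg (mul_nonneg (mul_nonneg ha0 hH0) (sub_nonneg.mpr hp1.le)) h3]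
      nlinarith [mul_nonneg (mul_nonneg hc.le hH0) hbr]
    have hsB : (1 - a) * s ≤ B := by
      have h1s : (1 - a) * s = Real.sqrt ((1 - a) ^ 2 * S) := by
        rw [Real.sqrt_mul (by positivity) S, Real.sqrt_sq ha1''.le]
      calc (1 - a) * s = Real.sqrt ((1 - a) ^ 2 * S) := h1s
        _ ≤ Real.sqrt (B ^ 2) := Real.sqrt_le_sqrt hB2
        _ = B := Real.sqrt_sq hB0
    nlinarith
  have hF1 : H / (1 + a) ≤ (s - a * (1 - p ^ 2) * t) / (1 - a ^ 2 * p ^ 2) := by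
    rw [div_le_div_iff₀ ha1' hc]; nlinarith
  have hF2 : (s - a * (1 - p ^ 2) * t) / (1 - a ^ 2 * p ^ 2) ≤ H / (1 - a) := by
    rw [div_le_div_iff₀ hc ha1'']; nlinarith
  have hF0 : 0 ≤ (s - a * (1 - p ^ 2) * t) / (1 - a ^ 2 * p ^ 2) :=
    le_trans (by positivity) hF1
  constructor
  · have hsq := pow_le_pow_left₀ (by positivity : (0:ℝ) ≤ H / (1 + a)) hF1 2
    have heq : (1 / (1 + a)) ^ 2 * ((1 - p ^ 2) * (m ^ 2 - t ^ 2)) = (H / (1 + a)) ^ 2 := by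
      rw [div_pow, div_pow, hH2]; ring
    linarith [hsq, heq.le]
  · have hsq := pow_le_pow_left₀ hF0 hF2 2
    have heq : (1 / (1 - a)) ^ 2 * ((1 - p ^ 2) * (m ^ 2 - t ^ 2)) = (H / (1 - a)) ^ 2 := by
      rw [div_pow, div_pow, hH2]; ring
    linarith [hsq, heq.le]

theorem stmt_5 (n : ℕ) (hn : 2 ≤ n) (a : ℝ) (ha : a ∈ Set.Ico (0 : ℝ) 1)
    (x : EuclideanSpace ℝ (Fin n)) (hx : x ∈ ball (0 : EuclideanSpace ℝ (Fin n)) 1)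
    (y : EuclideanSpace ℝ (Fin n)) :
    (1 / (1 + a)) ^ 2 * hKStar n x y ≤ (FaStar n a x y) ^ 2 ∧
    (FaStar n a x y) ^ 2 ≤ (1 / (1 - a)) ^ 2 * hKStar n x y := by
  obtain ⟨ha0, ha1⟩ := ha
  have hx' : ‖x‖ < 1 := mem_ball_zero_iff.mp hx
  have ht : (inner ℝ x y : ℝ) ^ 2 ≤ ‖x‖ ^ 2 * ‖y‖ ^ 2 := by
    have h := abs_real_inner_le_norm x y
    calc (inner ℝ x y : ℝ) ^ 2 = |(inner ℝ x y : ℝ)| ^ 2 := (sq_abs _).symm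
      _ ≤ (‖x‖ * ‖y‖) ^ 2 := by gcongr
      _ = ‖x‖ ^ 2 * ‖y‖ ^ 2 := by ring
  have key := funk_key a ‖x‖ ‖y‖ (inner ℝ x y) ha0 ha1 (norm_nonneg x) hx'
    (norm_nonneg y) ht
  simpa [FaStar, hKStar] using key
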